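/- Suppose differential operators A₁ ∈ A[∂₁], A₂ ∈ A[∂₂] satisfy H·Aᵢ + Aᵢ*·H = Aᵢ*(u) for i = 1, 2 where H = ∂₁∂₂ + u, and suppose [A₁, A₂] = P∂₁ + Q∂₂ + R·H with P ∈ A[∂₁], Q ∈ A[∂₂], R ∈ A[∂₁,∂₂]. If A is a domain, then R is skew-adjoint: R + R* = 0. -/

import Mathlib

namespace SkewAux

variable {V R : Type*} [CommRing V] [Ring R]

/-- monomial -/
def M (ι : V →+* R) (d1 d2 : R) (c : V) (i j : ℕ) : R := ι c * d1 ^ i * d2 ^ j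

/-- normal form map -/
noncomputable def T (ι : V →+* R) (d1 d2 : R) : ((ℕ × ℕ) →₀ V) →+ R :=
  AddMonoidHom.mk' (fun f => f.sum fun p c => ι c * d1 ^ p.1 * d2 ^ p.2)
    (fun f g => Finsupp.sum_add_index (by simp) (by intros; simp [add_mul]))

variable (ι : V →+* R) (d1 d2 : R)

lemma T_apply (f) : T ι d1 d2 f = f.sum fun p c => ι c * d1 ^ p.1 * d2 ^ p.2 := rfl

lemma T_single (p : ℕ × ℕ) (c : V) : T ι d1 d2 (Finsupp.single p c) = M ι d1 d2 c p.1 p.2 := by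
  rw [T_apply, Finsupp.sum_single_index (by simp)]; rfl

def Dset (C : ℕ × ℕ → Prop) : Set R :=
  {x | ∃ f : (ℕ × ℕ) →₀ V, (∀ p ∈ f.support, C p) ∧ x = T ι d1 d2 f}

variable {ι d1 d2}

lemma Dset_mono {C C' : ℕ × ℕ → Prop} (h : ∀ p, C p → C' p) :
    Dset ι d1 d2 C ⊆ Dset ι d1 d2 C' := fun x ⟨f, hf, hx⟩ => ⟨f, fun p hp => h p (hf p hp), hx⟩

lemma zero_mem_Dset {C : ℕ × ℕ → Prop} : (0 : R) ∈ Dset ι d1 d2 C :=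
  ⟨0, by simp, by simp⟩

lemma add_mem_Dset {C : ℕ × ℕ → Prop} {x y : R} (hx : x ∈ Dset ι d1 d2 C)
    (hy : y ∈ Dset ι d1 d2 C) : x + y ∈ Dset ι d1 d2 C := by
  obtain ⟨f, hf, rfl⟩ := hx
  obtain ⟨g, hg, rfl⟩ := hy
  refine ⟨f + g, fun p hp => ?_, (map_add _ _ _).symm⟩
  rcases Finset.mem_union.1 (Finsupp.support_add hp) with h | h
  · exact hf p h
  · exact hg p h

lemma neg_mem_Dset {C : ℕ × ℕ → Prop} {x : R} (hx : x ∈ Dset ι d1 d2 C) :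
    -x ∈ Dset ι d1 d2 C := by
  obtain ⟨f, hf, rfl⟩ := hx
  exact ⟨-f, fun p hp => hf p (by simpa using hp), (map_neg _ _).symm⟩

lemma sub_mem_Dset {C : ℕ × ℕ → Prop} {x y : R} (hx : x ∈ Dset ι d1 d2 C)
    (hy : y ∈ Dset ι d1 d2 C) : x - y ∈ Dset ι d1 d2 C := by
  rw [sub_eq_add_neg]; exact add_mem_Dset hx (neg_mem_Dset hy)

lemma single_mem_Dset {C : ℕ × ℕ → Prop} {c : V} {i j : ℕ} (h : C (i, j)) :
    M ι d1 d2 c i j ∈ Dset ι d1 d2 C := by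
  refine ⟨Finsupp.single (i, j) c, fun p hp => ?_, (T_single ι d1 d2 (i, j) c).symm⟩
  have := Finsupp.support_single_subset hp
  simp at this; subst this; exact h

lemma sum_mem_Dset {C : ℕ × ℕ → Prop} {α : Type*} {s : Finset α} {φ : α → R}
    (h : ∀ a ∈ s, φ a ∈ Dset ι d1 d2 C) : (∑ a ∈ s, φ a) ∈ Dset ι d1 d2 C := by
  classical
  induction s using Finset.induction_on with
  | empty => simpa using (zero_mem_Dset : (0:R) ∈ _)
  | @insert a s hni ih =>
    rw [Finset.sum_insert hni]
    exact add_mem_Dset (h _ (Finset.mem_insert_self _ _))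
      (ih fun a ha => h a (Finset.mem_insert_of_mem ha))

variable {δ1 δ2 : V → V}

section comm
variable (hdcomm : d1 * d2 = d2 * d1)
include hdcomm

lemma d2_pow_d1 (i : ℕ) : d2 * d1 ^ i = d1 ^ i * d2 := by
  induction i with
  | zero => simp
  | succ n ih => rw [pow_succ, ← mul_assoc, ih, mul_assoc, ← hdcomm, ← mul_assoc]

lemma d2pow_d1 (j : ℕ) : d2 ^ j * d1 = d1 * d2 ^ j := by
  induction j with
  | zero => simp
  | succ n ih => rw [pow_succ, mul_assoc, ← hdcomm, ← mul_assoc, ih, mul_assoc]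

lemma M_mul_d1 (c : V) (i j : ℕ) : M ι d1 d2 c i j * d1 = M ι d1 d2 c (i+1) j := by
  unfold M
  rw [mul_assoc, d2pow_d1 hdcomm, ← mul_assoc, mul_assoc (ι c), ← pow_succ]

end comm

lemma M_mul_d2 (c : V) (i j : ℕ) : M ι d1 d2 c i j * d2 = M ι d1 d2 c i (j+1) := by
  unfold M; rw [mul_assoc, mul_assoc, ← pow_succ, ← mul_assoc]

section leib

lemma d1_mul_M (hleib1 : ∀ v : V, d1 * ι v = ι v * d1 + ι (δ1 v)) (c : V) (i j : ℕ) :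
    d1 * M ι d1 d2 c i j = M ι d1 d2 c (i+1) j + M ι d1 d2 (δ1 c) i j := by
  unfold M
  rw [← mul_assoc, ← mul_assoc, hleib1, add_mul, add_mul, mul_assoc (ι c) d1,
    ← pow_succ']

lemma d2_mul_M (hdcomm : d1 * d2 = d2 * d1)
    (hleib2 : ∀ v : V, d2 * ι v = ι v * d2 + ι (δ2 v)) (c : V) (i j : ℕ) :
    d2 * M ι d1 d2 c i j = M ι d1 d2 c i (j+1) + M ι d1 d2 (δ2 c) i j := by
  unfold M
  rw [← mul_assoc, ← mul_assoc, hleib2, add_mul, add_mul, mul_assoc (ι c) d2,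
    d2_pow_d1 hdcomm, ← mul_assoc, mul_assoc, mul_assoc, ← pow_succ', ← mul_assoc]

lemma iota_mul_M (c a : V) (i j : ℕ) : ι c * M ι d1 d2 a i j = M ι d1 d2 (c * a) i j := by
  unfold M; rw [← mul_assoc, ← mul_assoc, ← map_mul]

end leib

lemma T_eq_sum (f : (ℕ × ℕ) →₀ V) :
    T ι d1 d2 f = ∑ p ∈ f.support, M ι d1 d2 (f p) p.1 p.2 := rfl

section ops
variable (hleib1 : ∀ v : V, d1 * ι v = ι v * d1 + ι (δ1 v))
variable (hleib2 : ∀ v : V, d2 * ι v = ι v * d2 + ι (δ2 v))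
variable (hdcomm : d1 * d2 = d2 * d1)

lemma lmul_iota_mem {C : ℕ × ℕ → Prop} {x : R} (c : V) (hx : x ∈ Dset ι d1 d2 C) :
    ι c * x ∈ Dset ι d1 d2 C := by
  obtain ⟨f, hf, rfl⟩ := hx
  rw [T_eq_sum, Finset.mul_sum]
  exact sum_mem_Dset fun p hp => by
    rw [iota_mul_M]; exact single_mem_Dset (hf p hp)

include hleib1 in
lemma lmul_d1_mem {C C' : ℕ × ℕ → Prop} {x : R} (hx : x ∈ Dset ι d1 d2 C)
    (h1 : ∀ p, C p → C' p) (h2 : ∀ p : ℕ × ℕ, C p → C' (p.1 + 1, p.2)) :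
    d1 * x ∈ Dset ι d1 d2 C' := by
  obtain ⟨f, hf, rfl⟩ := hx
  rw [T_eq_sum, Finset.mul_sum]
  refine sum_mem_Dset fun p hp => ?_
  rw [d1_mul_M hleib1]
  exact add_mem_Dset (single_mem_Dset (h2 p (hf p hp))) (single_mem_Dset (h1 p (hf p hp)))

include hleib2 hdcomm in
lemma lmul_d2_mem {C C' : ℕ × ℕ → Prop} {x : R} (hx : x ∈ Dset ι d1 d2 C)
    (h1 : ∀ p, C p → C' p) (h2 : ∀ p : ℕ × ℕ, C p → C' (p.1, p.2 + 1)) :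
    d2 * x ∈ Dset ι d1 d2 C' := by
  obtain ⟨f, hf, rfl⟩ := hx
  rw [T_eq_sum, Finset.mul_sum]
  refine sum_mem_Dset fun p hp => ?_
  rw [d2_mul_M hdcomm hleib2]
  exact add_mem_Dset (single_mem_Dset (h2 p (hf p hp))) (single_mem_Dset (h1 p (hf p hp)))

include hdcomm in
lemma rmul_d1_mem {C C' : ℕ × ℕ → Prop} {x : R} (hx : x ∈ Dset ι d1 d2 C)
    (h2 : ∀ p : ℕ × ℕ, C p → C' (p.1 + 1, p.2)) :
    x * d1 ∈ Dset ι d1 d2 C' := by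
  obtain ⟨f, hf, rfl⟩ := hx
  rw [T_eq_sum, Finset.sum_mul]
  refine sum_mem_Dset fun p hp => ?_
  rw [M_mul_d1 hdcomm]
  exact single_mem_Dset (h2 p (hf p hp))

lemma rmul_d2_mem {C C' : ℕ × ℕ → Prop} {x : R} (hx : x ∈ Dset ι d1 d2 C)
    (h2 : ∀ p : ℕ × ℕ, C p → C' (p.1, p.2 + 1)) :
    x * d2 ∈ Dset ι d1 d2 C' := by
  obtain ⟨f, hf, rfl⟩ := hx
  rw [T_eq_sum, Finset.sum_mul]
  refine sum_mem_Dset fun p hp => ?_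
  rw [M_mul_d2]
  exact single_mem_Dset (h2 p (hf p hp))

include hleib2 hdcomm in
lemma d2pow_iota_mem (j : ℕ) (c : V) :
    d2 ^ j * ι c ∈ Dset ι d1 d2 (fun p => p.1 = 0 ∧ p.2 ≤ j) := by
  induction j with
  | zero =>
    have h0 : d2 ^ 0 * ι c = M ι d1 d2 c 0 0 := by simp [M]
    rw [h0]
    exact single_mem_Dset (C := fun p => p.1 = 0 ∧ p.2 ≤ 0) ⟨rfl, Nat.le_refl 0⟩
  | succ n ih =>
    rw [pow_succ', mul_assoc]
    exact lmul_d2_mem hleib2 hdcomm ih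
      (fun p hp => ⟨hp.1, hp.2.trans (Nat.le_succ n)⟩)
      (fun p hp => ⟨hp.1, Nat.succ_le_succ hp.2⟩)

include hleib1 hleib2 hdcomm in
lemma pow_mul_iota_mem (i j : ℕ) (c : V) :
    d1 ^ i * d2 ^ j * ι c ∈ Dset ι d1 d2 (fun p => p.1 ≤ i ∧ p.2 ≤ j) := by
  induction i with
  | zero =>
    have h0 : d1 ^ 0 * d2 ^ j * ι c = d2 ^ j * ι c := by simp
    rw [h0]
    exact Dset_mono (fun p hp => ⟨hp.1.le, hp.2⟩) (d2pow_iota_mem hleib2 hdcomm j c)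
  | succ n ih =>
    have ih2 : d1 ^ n * (d2 ^ j * ι c) ∈ Dset ι d1 d2 (fun p => p.1 ≤ n ∧ p.2 ≤ j) := by
      rw [← mul_assoc]; exact ih
    have h0 : d1 ^ (n + 1) * d2 ^ j * ι c = d1 * (d1 ^ n * (d2 ^ j * ι c)) := by
      rw [pow_succ', mul_assoc, mul_assoc]
    rw [h0]
    exact lmul_d1_mem hleib1 ih2
      (fun p hp => ⟨hp.1.trans (Nat.le_succ n), hp.2⟩)
      (fun p hp => ⟨Nat.succ_le_succ hp.1, hp.2⟩)

include hleib1 hleib2 hdcomm in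
lemma rmul_iota_mem {C C' : ℕ × ℕ → Prop} {x : R} (hx : x ∈ Dset ι d1 d2 C)
    (hdc : ∀ p, C p → ∀ q : ℕ × ℕ, q.1 ≤ p.1 → q.2 ≤ p.2 → C' q) (c : V) :
    x * ι c ∈ Dset ι d1 d2 C' := by
  obtain ⟨f, hf, rfl⟩ := hx
  rw [T_eq_sum, Finset.sum_mul]
  refine sum_mem_Dset fun p hp => ?_
  have heq : M ι d1 d2 (f p) p.1 p.2 * ι c = ι (f p) * (d1 ^ p.1 * d2 ^ p.2 * ι c) := by
    unfold M; rw [mul_assoc, mul_assoc, mul_assoc]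
  rw [heq]
  have hmem : d1 ^ p.1 * d2 ^ p.2 * ι c ∈ Dset ι d1 d2 C' :=
    Dset_mono (fun q hq => hdc p (hf p hp) q hq.1 hq.2)
      (pow_mul_iota_mem hleib1 hleib2 hdcomm p.1 p.2 c)
  exact lmul_iota_mem _ hmem

include hleib1 hleib2 hdcomm in
lemma mul_mem_Dset {C C' C'' : ℕ × ℕ → Prop} {x y : R} (hx : x ∈ Dset ι d1 d2 C)
    (hy : y ∈ Dset ι d1 d2 C')
    (hcomp : ∀ p q r : ℕ × ℕ, C p → C' q → r.1 ≤ p.1 + q.1 → r.2 ≤ p.2 + q.2 → C'' r) :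
    x * y ∈ Dset ι d1 d2 C'' := by
  obtain ⟨f, hf, rfl⟩ := hx
  rw [T_eq_sum, Finset.sum_mul]
  refine sum_mem_Dset fun p hp => ?_
  have hA : ∀ j : ℕ, d2 ^ j * y ∈
      Dset ι d1 d2 (fun r => ∃ q : ℕ × ℕ, C' q ∧ r.1 = q.1 ∧ r.2 ≤ q.2 + j) := by
    intro j
    induction j with
    | zero =>
      have h0 : d2 ^ 0 * y = y := by simp
      rw [h0]
      exact Dset_mono (fun q hq => ⟨q, hq, rfl, Nat.le_add_right _ 0⟩) hy
    | succ n ih =>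
      rw [pow_succ', mul_assoc]
      exact lmul_d2_mem hleib2 hdcomm ih
        (fun r hr => by obtain ⟨q, hq, h1, h2⟩ := hr; exact ⟨q, hq, h1, h2.trans (Nat.le_succ _)⟩)
        (fun r hr => by obtain ⟨q, hq, h1, h2⟩ := hr; exact ⟨q, hq, h1, Nat.succ_le_succ h2⟩)
  have hB : ∀ i : ℕ, d1 ^ i * (d2 ^ p.2 * y) ∈
      Dset ι d1 d2 (fun r => ∃ q : ℕ × ℕ, C' q ∧ r.1 ≤ q.1 + i ∧ r.2 ≤ q.2 + p.2) := by
    intro i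
    induction i with
    | zero =>
      have h0 : d1 ^ 0 * (d2 ^ p.2 * y) = d2 ^ p.2 * y := by simp
      rw [h0]
      exact Dset_mono
        (fun r hr => by
          obtain ⟨q, hq, h1, h2⟩ := hr; exact ⟨q, hq, h1.le.trans (Nat.le_add_right _ 0), h2⟩)
        (hA p.2)
    | succ n ih =>
      rw [pow_succ', mul_assoc]
      exact lmul_d1_mem hleib1 ih
        (fun r hr => by obtain ⟨q, hq, h1, h2⟩ := hr; exact ⟨q, hq, h1.trans (Nat.le_succ _), h2⟩)
        (fun r hr => by obtain ⟨q, hq, h1, h2⟩ := hr; exact ⟨q, hq, Nat.succ_le_succ h1, h2⟩)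
  have heq : M ι d1 d2 (f p) p.1 p.2 * y = ι (f p) * (d1 ^ p.1 * (d2 ^ p.2 * y)) := by
    unfold M; rw [mul_assoc, mul_assoc]
  rw [heq]
  refine lmul_iota_mem _ (Dset_mono ?_ (hB p.1))
  rintro r ⟨q, hq, h1, h2⟩
  exact hcomp p q r (hf p hp) hq (by omega) (by omega)

end ops
variable (hleib1 : ∀ v : V, d1 * ι v = ι v * d1 + ι (δ1 v))
variable (hleib2 : ∀ v : V, d2 * ι v = ι v * d2 + ι (δ2 v))
variable (hdcomm : d1 * d2 = d2 * d1)

lemma iota_mem_Dset {C : ℕ × ℕ → Prop} (c : V) (h : C (0, 0)) : ι c ∈ Dset ι d1 d2 C := by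
  have h0 : ι c = M ι d1 d2 c 0 0 := by simp [M]
  rw [h0]; exact single_mem_Dset h

lemma one_mem_Dset {C : ℕ × ℕ → Prop} (h : C (0, 0)) : (1 : R) ∈ Dset ι d1 d2 C := by
  have h0 : (1 : R) = ι 1 := by simp
  rw [h0]; exact iota_mem_Dset 1 h

lemma d1_mem_Dset {C : ℕ × ℕ → Prop} (h : C (1, 0)) : d1 ∈ Dset ι d1 d2 C := by
  have h0 : d1 = M ι d1 d2 (1 : V) 1 0 := by unfold M; simp
  nth_rewrite 2 [h0]; exact single_mem_Dset h

lemma d2_mem_Dset {C : ℕ × ℕ → Prop} (h : C (0, 1)) : d2 ∈ Dset ι d1 d2 C := by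
  have h0 : d2 = M ι d1 d2 (1 : V) 0 1 := by unfold M; simp
  nth_rewrite 2 [h0]; exact single_mem_Dset h

include hleib1 hleib2 hdcomm in
lemma closure12_mem {x : R} (hx : x ∈ Subring.closure (Set.range ⇑ι ∪ {d1, d2})) :
    x ∈ Dset ι d1 d2 (fun _ => True) := by
  induction hx using Subring.closure_induction with
  | mem y hy =>
    rcases hy with ⟨v, rfl⟩ | hy
    · exact iota_mem_Dset v trivial
    · rcases hy with rfl | rfl
      · exact d1_mem_Dset trivial
      · exact d2_mem_Dset trivial
  | zero => exact zero_mem_Dset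
  | one => exact one_mem_Dset trivial
  | add _ _ _ _ ha hb => exact add_mem_Dset ha hb
  | neg _ _ ha => exact neg_mem_Dset ha
  | mul _ _ _ _ ha hb =>
    exact mul_mem_Dset hleib1 hleib2 hdcomm ha hb (fun _ _ _ _ _ _ _ => trivial)

include hleib1 hleib2 hdcomm in
lemma closure1_mem {x : R} (hx : x ∈ Subring.closure (Set.range ⇑ι ∪ {d1})) :
    x ∈ Dset ι d1 d2 (fun p => p.2 = 0) := by
  induction hx using Subring.closure_induction with
  | mem y hy =>
    rcases hy with ⟨v, rfl⟩ | hy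
    · exact iota_mem_Dset v rfl
    · rcases hy with rfl
      exact d1_mem_Dset rfl
  | zero => exact zero_mem_Dset
  | one => exact one_mem_Dset rfl
  | add _ _ _ _ ha hb => exact add_mem_Dset ha hb
  | neg _ _ ha => exact neg_mem_Dset ha
  | mul _ _ _ _ ha hb =>
    exact mul_mem_Dset hleib1 hleib2 hdcomm ha hb
      (fun p q r hp hq h1 h2 => by omega)

include hleib1 hleib2 hdcomm in
lemma closure2_mem {x : R} (hx : x ∈ Subring.closure (Set.range ⇑ι ∪ {d2})) :
    x ∈ Dset ι d1 d2 (fun p => p.1 = 0) := by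
  induction hx using Subring.closure_induction with
  | mem y hy =>
    rcases hy with ⟨v, rfl⟩ | hy
    · exact iota_mem_Dset v rfl
    · rcases hy with rfl
      exact d2_mem_Dset rfl
  | zero => exact zero_mem_Dset
  | one => exact one_mem_Dset rfl
  | add _ _ _ _ ha hb => exact add_mem_Dset ha hb
  | neg _ _ ha => exact neg_mem_Dset ha
  | mul _ _ _ _ ha hb =>
    exact mul_mem_Dset hleib1 hleib2 hdcomm ha hb
      (fun p q r hp hq h1 h2 => by omega)

lemma star_mem_closure {R : Type*} [Ring R] [StarRing R] {s : Set R}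
    (hs : ∀ x ∈ s, star x ∈ Subring.closure s) {x : R}
    (hx : x ∈ Subring.closure s) : star x ∈ Subring.closure s := by
  induction hx using Subring.closure_induction with
  | mem y hy => exact hs y hy
  | zero => simpa using Subring.zero_mem _
  | one => simpa using Subring.one_mem _
  | add a b _ _ ha hb => rw [star_add]; exact Subring.add_mem _ ha hb
  | neg a _ ha => rw [star_neg]; exact Subring.neg_mem _ ha
  | mul a b _ _ ha hb => rw [star_mul]; exact Subring.mul_mem _ hb ha


lemma M_add (a b : V) (i j : ℕ) :
    M ι d1 d2 (a + b) i j = M ι d1 d2 a i j + M ι d1 d2 b i j := by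
  unfold M; rw [map_add, add_mul, add_mul]

include hleib1 hleib2 hdcomm in
lemma H_mul_M (u c : V) (i j : ℕ) :
    (d1 * d2 + ι u) * M ι d1 d2 c i j
      = M ι d1 d2 c (i+1) (j+1) +
        (M ι d1 d2 (δ1 c) i (j+1) + M ι d1 d2 (δ2 c) (i+1) j
          + M ι d1 d2 (δ1 (δ2 c) + u * c) i j) := by
  rw [add_mul, mul_assoc, d2_mul_M hdcomm hleib2, mul_add, d1_mul_M hleib1,
    d1_mul_M hleib1, iota_mul_M, M_add]
  abel

include hleib1 hleib2 hdcomm in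
lemma sandwich (u c : V) (i j : ℕ) :
    (d1 * d2 + ι u) * M ι d1 d2 c i j * (d1 * d2 + ι u) - M ι d1 d2 c (i+2) (j+2)
      ∈ Dset ι d1 d2 (fun q => q.1 + q.2 ≤ i + j + 3) := by
  set E := M ι d1 d2 (δ1 c) i (j+1) + M ι d1 d2 (δ2 c) (i+1) j
    + M ι d1 d2 (δ1 (δ2 c) + u * c) i j with hE
  have hEmem : E ∈ Dset ι d1 d2 (fun q => q.1 + q.2 ≤ i + j + 1) := by
    refine add_mem_Dset (add_mem_Dset (single_mem_Dset ?_) (single_mem_Dset ?_))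
      (single_mem_Dset ?_) <;> simp <;> omega
  have key : (d1 * d2 + ι u) * M ι d1 d2 c i j * (d1 * d2 + ι u)
      = M ι d1 d2 c (i+2) (j+2)
        + (M ι d1 d2 c (i+1) (j+1) * ι u + ((E * d1) * d2 + E * ι u)) := by
    rw [H_mul_M hleib1 hleib2 hdcomm, ← hE, add_mul, mul_add, mul_add]
    have h1 : M ι d1 d2 c (i+1) (j+1) * (d1 * d2) = M ι d1 d2 c (i+2) (j+2) := by
      rw [← mul_assoc, M_mul_d1 hdcomm, M_mul_d2]
    have h2 : E * (d1 * d2) = (E * d1) * d2 := by rw [mul_assoc]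
    rw [h1, h2]
    abel
  rw [key, add_sub_cancel_left]
  have hm1 : M ι d1 d2 c (i+1) (j+1) * ι u ∈ Dset ι d1 d2 (fun q => q.1 + q.2 ≤ i + j + 3) := by
    refine rmul_iota_mem hleib1 hleib2 hdcomm
      (single_mem_Dset (C := fun q => q.1 ≤ i + 1 ∧ q.2 ≤ j + 1) ⟨le_refl _, le_refl _⟩)
      (fun p hp q h1 h2 => ?_) u
    omega
  have hm2 : (E * d1) * d2 ∈ Dset ι d1 d2 (fun q => q.1 + q.2 ≤ i + j + 3) := by
    have h1 : E * d1 ∈ Dset ι d1 d2 (fun q => q.1 + q.2 ≤ i + j + 2) :=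
      rmul_d1_mem hdcomm hEmem (fun p hp => by simp only at *; omega)
    exact rmul_d2_mem h1 (fun p hp => by simp only at *; omega)
  have hm3 : E * ι u ∈ Dset ι d1 d2 (fun q => q.1 + q.2 ≤ i + j + 3) := by
    refine rmul_iota_mem hleib1 hleib2 hdcomm hEmem (fun p hp q h1 h2 => ?_) u
    omega
  exact add_mem_Dset hm1 (add_mem_Dset hm2 hm3)

end SkewAux


/-- **Skew-adjointness of `R` in the decomposition of `[A₁, A₂]`** (end of the proof of
Lemma 5 of the paper).

`R'` models the ring `A[∂₁, ∂₂]` of differential operators over a commutative domain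
`A` (embedded by `ι`), with adjoint given by the star operation (`∂ᵢ* = -∂ᵢ`, `v* = v`,
`(PQ)* = Q*P*`); the monomials `ι(c)·∂₁ⁱ∂₂ʲ` are linearly independent.  Suppose
`A₁ ∈ A[∂₁]`, `A₂ ∈ A[∂₂]` satisfy `H·Aᵢ + Aᵢ*·H = Aᵢ*(u)` for `i = 1, 2`, where
`H = ∂₁∂₂ + u` and `wᵢ = Aᵢ*(u) ∈ A` is characterized by `Aᵢ*·u ≡ wᵢ` modulo the right
ideal generated by `∂₁, ∂₂`.  If `[A₁, A₂] = P∂₁ + Q∂₂ + Rr·H` with `P ∈ A[∂₁]`,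
`Q ∈ A[∂₂]`, `Rr ∈ A[∂₁, ∂₂]`, then `Rr` is skew-adjoint: `Rr + Rr* = 0`. -/
theorem skew_adjointness_of_R
    {V R : Type*} [CommRing V] [IsDomain V] [Algebra ℂ V]
    [Ring R] [StarRing R]
    (ι : V →+* R) (hι : Function.Injective ι)
    (d1 d2 : R)
    (δ1 δ2 : Derivation ℂ V V)
    (hleib1 : ∀ v : V, d1 * ι v = ι v * d1 + ι (δ1 v))
    (hleib2 : ∀ v : V, d2 * ι v = ι v * d2 + ι (δ2 v))
    (hdcomm : d1 * d2 = d2 * d1)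
    (hstar_d1 : star d1 = -d1)
    (hstar_d2 : star d2 = -d2)
    (hstar_ι : ∀ v : V, star (ι v) = ι v)
    (hindep : ∀ f : (ℕ × ℕ) →₀ V,
      (f.sum fun p c => ι c * d1 ^ p.1 * d2 ^ p.2) = 0 → f = 0)
    (u : V) (A1 A2 : R)
    (hA1 : A1 ∈ Subring.closure (Set.range ⇑ι ∪ {d1}))
    (hA2 : A2 ∈ Subring.closure (Set.range ⇑ι ∪ {d2}))
    (w1 w2 : V)
    (hw1 : ∃ X Y : R, star A1 * ι u = ι w1 + X * d1 + Y * d2)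
    (hw2 : ∃ X Y : R, star A2 * ι u = ι w2 + X * d1 + Y * d2)
    (hHA1 : (d1 * d2 + ι u) * A1 + star A1 * (d1 * d2 + ι u) = ι w1)
    (hHA2 : (d1 * d2 + ι u) * A2 + star A2 * (d1 * d2 + ι u) = ι w2)
    (P Q Rr : R)
    (hP : P ∈ Subring.closure (Set.range ⇑ι ∪ {d1}))
    (hQ : Q ∈ Subring.closure (Set.range ⇑ι ∪ {d2}))
    (hRr : Rr ∈ Subring.closure (Set.range ⇑ι ∪ {d1, d2}))
    (hdec : A1 * A2 - A2 * A1 = P * d1 + Q * d2 + Rr * (d1 * d2 + ι u)) :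
    Rr + star Rr = 0 := by
  classical
  open SkewAux in
  -- abbreviations
  set H : R := d1 * d2 + ι u with hH
  -- injectivity of the normal form map
  have hTinj : Function.Injective (T ι d1 d2) := by
    refine (injective_iff_map_eq_zero _).2 ?_
    intro f hf
    exact hindep f hf
  -- star of H
  have hstarH : star H = H := by
    rw [hH, star_add, star_mul, hstar_d1, hstar_d2, hstar_ι, neg_mul_neg, ← hdcomm]
  -- star of closures
  have hstar1 : ∀ x ∈ Subring.closure (Set.range ⇑ι ∪ {d1}),
      star x ∈ Subring.closure (Set.range ⇑ι ∪ {d1}) := by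
    intro x hx
    refine star_mem_closure (fun y hy => ?_) hx
    rcases hy with ⟨v, rfl⟩ | hy
    · rw [hstar_ι]; exact Subring.subset_closure (Or.inl ⟨v, rfl⟩)
    · rcases hy with rfl
      rw [hstar_d1]; exact Subring.neg_mem _ (Subring.subset_closure (Or.inr rfl))
  have hstar2 : ∀ x ∈ Subring.closure (Set.range ⇑ι ∪ {d2}),
      star x ∈ Subring.closure (Set.range ⇑ι ∪ {d2}) := by
    intro x hx
    refine star_mem_closure (fun y hy => ?_) hx
    rcases hy with ⟨v, rfl⟩ | hy
    · rw [hstar_ι]; exact Subring.subset_closure (Or.inl ⟨v, rfl⟩)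
    · rcases hy with rfl
      rw [hstar_d2]; exact Subring.neg_mem _ (Subring.subset_closure (Or.inr rfl))
  have hstar12 : ∀ x ∈ Subring.closure (Set.range ⇑ι ∪ {d1, d2}),
      star x ∈ Subring.closure (Set.range ⇑ι ∪ {d1, d2}) := by
    intro x hx
    refine star_mem_closure (fun y hy => ?_) hx
    rcases hy with ⟨v, rfl⟩ | hy
    · rw [hstar_ι]; exact Subring.subset_closure (Or.inl ⟨v, rfl⟩)
    · rcases hy with rfl | rfl
      · rw [hstar_d1]; exact Subring.neg_mem _ (Subring.subset_closure (Or.inr (Or.inl rfl)))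
      · rw [hstar_d2]; exact Subring.neg_mem _ (Subring.subset_closure (Or.inr (Or.inr rfl)))
  -- the starred decomposition
  have sdec : star A2 * star A1 - star A1 * star A2
      = star d1 * star P + star d2 * star Q + H * star Rr := by
    have h := congrArg star hdec
    rw [star_sub, star_mul, star_mul, star_add, star_add, star_mul, star_mul, star_mul,
      hstarH] at h
    exact h
  rw [hstar_d1, hstar_d2] at sdec
  -- the main operator identity
  have hHC : H * (A1 * A2 - A2 * A1) + (star A2 * star A1 - star A1 * star A2) * H
      = ι w1 * A2 - ι w2 * A1 - star A1 * ι w2 + star A2 * ι w1 := by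
    linear_combination (norm := noncomm_ring) hHA1 * A2 - hHA2 * A1
      - star A1 * hHA2 + star A2 * hHA1
  have key : H * (Rr + star Rr) * H
      = ι w1 * A2 - ι w2 * A1 - star A1 * ι w2 + star A2 * ι w1
        - H * (P * d1) - H * (Q * d2) + d1 * star P * H + d2 * star Q * H := by
    linear_combination (norm := noncomm_ring) hHC - H * hdec - sdec * H
  -- Dset memberships of the right-hand side
  have hA1' := closure1_mem hleib1 hleib2 hdcomm hA1
  have hA2' := closure2_mem hleib1 hleib2 hdcomm hA2
  have hP' := closure1_mem hleib1 hleib2 hdcomm hP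
  have hQ' := closure2_mem hleib1 hleib2 hdcomm hQ
  have hsA1' := closure1_mem hleib1 hleib2 hdcomm (hstar1 _ hA1)
  have hsA2' := closure2_mem hleib1 hleib2 hdcomm (hstar2 _ hA2)
  have hsP' := closure1_mem hleib1 hleib2 hdcomm (hstar1 _ hP)
  have hsQ' := closure2_mem hleib1 hleib2 hdcomm (hstar2 _ hQ)
  set CS : ℕ × ℕ → Prop := fun q => q.1 ≤ 1 ∨ q.2 ≤ 1 with hCS
  have t1 : ι w1 * A2 ∈ Dset ι d1 d2 CS :=
    Dset_mono (fun p hp => Or.inl (by omega)) (lmul_iota_mem w1 hA2')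
  have t2 : ι w2 * A1 ∈ Dset ι d1 d2 CS :=
    Dset_mono (fun p hp => Or.inr (by omega)) (lmul_iota_mem w2 hA1')
  have t3 : star A1 * ι w2 ∈ Dset ι d1 d2 CS :=
    rmul_iota_mem hleib1 hleib2 hdcomm hsA1'
      (fun p hp q h1 h2 => Or.inr (by omega)) w2
  have t4 : star A2 * ι w1 ∈ Dset ι d1 d2 CS :=
    rmul_iota_mem hleib1 hleib2 hdcomm hsA2'
      (fun p hp q h1 h2 => Or.inl (by omega)) w1
  have hexpL : ∀ y : R, H * y = d1 * (d2 * y) + ι u * y := by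
    intro y; rw [hH, add_mul, mul_assoc]
  have hexpR : ∀ y : R, y * H = y * d1 * d2 + y * ι u := by
    intro y; rw [hH, mul_add, mul_assoc]
  have t5 : H * (P * d1) ∈ Dset ι d1 d2 CS := by
    have hPd1 : P * d1 ∈ Dset ι d1 d2 (fun p => p.2 = 0) :=
      rmul_d1_mem hdcomm hP' (fun p hp => hp)
    have h1 : d2 * (P * d1) ∈ Dset ι d1 d2 (fun p => p.2 ≤ 1) :=
      lmul_d2_mem hleib2 hdcomm hPd1 (fun p hp => by omega) (fun p hp => by simp; omega)
    have h2 : d1 * (d2 * (P * d1)) ∈ Dset ι d1 d2 (fun p => p.2 ≤ 1) :=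
      lmul_d1_mem hleib1 h1 (fun p hp => hp) (fun p hp => hp)
    have h3 : ι u * (P * d1) ∈ Dset ι d1 d2 (fun p => p.2 ≤ 1) :=
      Dset_mono (fun p hp => by omega) (lmul_iota_mem u hPd1)
    rw [hexpL]
    exact Dset_mono (fun p hp => Or.inr hp) (add_mem_Dset h2 h3)
  have t6 : H * (Q * d2) ∈ Dset ι d1 d2 CS := by
    have hQd2 : Q * d2 ∈ Dset ι d1 d2 (fun p => p.1 = 0) :=
      rmul_d2_mem hQ' (fun p hp => hp)
    have h1 : d2 * (Q * d2) ∈ Dset ι d1 d2 (fun p => p.1 = 0) :=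
      lmul_d2_mem hleib2 hdcomm hQd2 (fun p hp => hp) (fun p hp => hp)
    have h2 : d1 * (d2 * (Q * d2)) ∈ Dset ι d1 d2 (fun p => p.1 ≤ 1) :=
      lmul_d1_mem hleib1 h1 (fun p hp => by omega) (fun p hp => by simp; omega)
    have h3 : ι u * (Q * d2) ∈ Dset ι d1 d2 (fun p => p.1 ≤ 1) :=
      Dset_mono (fun p hp => by omega) (lmul_iota_mem u hQd2)
    rw [hexpL]
    exact Dset_mono (fun p hp => Or.inl hp) (add_mem_Dset h2 h3)
  have t7 : d1 * star P * H ∈ Dset ι d1 d2 CS := by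
    have hd1P : d1 * star P ∈ Dset ι d1 d2 (fun p => p.2 = 0) :=
      lmul_d1_mem hleib1 hsP' (fun p hp => hp) (fun p hp => hp)
    have h1 : d1 * star P * d1 ∈ Dset ι d1 d2 (fun p => p.2 = 0) :=
      rmul_d1_mem hdcomm hd1P (fun p hp => hp)
    have h2 : d1 * star P * d1 * d2 ∈ Dset ι d1 d2 (fun p => p.2 ≤ 1) :=
      rmul_d2_mem h1 (fun p hp => by simp; omega)
    have h3 : d1 * star P * ι u ∈ Dset ι d1 d2 (fun p => p.2 ≤ 1) :=
      rmul_iota_mem hleib1 hleib2 hdcomm hd1P (fun p hp q hq1 hq2 => by omega) u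
    rw [hexpR]
    exact Dset_mono (fun p hp => Or.inr hp) (add_mem_Dset h2 h3)
  have t8 : d2 * star Q * H ∈ Dset ι d1 d2 CS := by
    have hd2Q : d2 * star Q ∈ Dset ι d1 d2 (fun p => p.1 = 0) :=
      lmul_d2_mem hleib2 hdcomm hsQ' (fun p hp => hp) (fun p hp => hp)
    have h1 : d2 * star Q * d1 ∈ Dset ι d1 d2 (fun p => p.1 ≤ 1) :=
      rmul_d1_mem hdcomm hd2Q (fun p hp => by simp; omega)
    have h2 : d2 * star Q * d1 * d2 ∈ Dset ι d1 d2 (fun p => p.1 ≤ 1) :=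
      rmul_d2_mem h1 (fun p hp => hp)
    have h3 : d2 * star Q * ι u ∈ Dset ι d1 d2 (fun p => p.1 ≤ 1) :=
      rmul_iota_mem hleib1 hleib2 hdcomm hd2Q (fun p hp q hq1 hq2 => by omega) u
    rw [hexpR]
    exact Dset_mono (fun p hp => Or.inl hp) (add_mem_Dset h2 h3)
  have hSmem : ι w1 * A2 - ι w2 * A1 - star A1 * ι w2 + star A2 * ι w1
        - H * (P * d1) - H * (Q * d2) + d1 * star P * H + d2 * star Q * H
      ∈ Dset ι d1 d2 CS :=
    add_mem_Dset (add_mem_Dset (sub_mem_Dset (sub_mem_Dset (add_mem_Dset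
      (sub_mem_Dset (sub_mem_Dset t1 t2) t3) t4) t5) t6) t7) t8
  obtain ⟨fS, hfS, hSeq⟩ := hSmem
  -- normal form of Rr + star Rr
  obtain ⟨t, -, hNt⟩ := closure12_mem hleib1 hleib2 hdcomm
    (Subring.add_mem _ hRr (hstar12 _ hRr))
  -- suppose it is nonzero
  by_contra hne
  have htne : t ≠ 0 := by
    intro h0
    rw [h0, map_zero] at hNt
    exact hne hNt
  obtain ⟨p₀, hp₀m, hmax⟩ := t.support.exists_max_image (fun p => p.1 + p.2)
    (Finsupp.support_nonempty_iff.2 htne)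
  -- sandwich each monomial
  have hsand : ∀ p : ℕ × ℕ, ∃ g : (ℕ × ℕ) →₀ V,
      (∀ q ∈ g.support, q.1 + q.2 ≤ p.1 + p.2 + 3) ∧
      H * M ι d1 d2 (t p) p.1 p.2 * H
        = T ι d1 d2 (Finsupp.single (p.1 + 2, p.2 + 2) (t p)) + T ι d1 d2 g := by
    intro p
    obtain ⟨g, hg, heq⟩ := sandwich hleib1 hleib2 hdcomm u (t p) p.1 p.2
    refine ⟨g, hg, ?_⟩
    rw [T_single]
    have := eq_add_of_sub_eq heq
    rw [this]
    ring_nf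
    rw [add_comm]
  choose g hgdeg hgeq using hsand
  set s : (ℕ × ℕ) →₀ V :=
    ∑ p ∈ t.support, (Finsupp.single (p.1 + 2, p.2 + 2) (t p) + g p) with hs
  have hexpand : H * T ι d1 d2 t * H = T ι d1 d2 s := by
    rw [T_eq_sum, Finset.mul_sum, Finset.sum_mul, hs, map_sum]
    exact Finset.sum_congr rfl fun p _ => (hgeq p).trans (map_add _ _ _).symm
  have hsf : s = fS := by
    apply hTinj
    rw [← hexpand, ← hNt, key]
    exact hSeq
  -- evaluate at the top point
  set q₀ : ℕ × ℕ := (p₀.1 + 2, p₀.2 + 2) with hq₀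
  have hf0 : fS q₀ = 0 := by
    by_contra h
    have hq : q₀ ∈ fS.support := Finsupp.mem_support_iff.2 h
    have := hfS _ hq
    rw [hCS] at this
    simp only [hq₀] at this
    omega
  have hg0 : ∀ p ∈ t.support, g p q₀ = 0 := by
    intro p hp
    by_contra h
    have hq : q₀ ∈ (g p).support := Finsupp.mem_support_iff.2 h
    have h1 := hgdeg p _ hq
    have h2 := hmax p hp
    simp only [hq₀] at h1
    omega
  have hs0 : s q₀ = t p₀ := by
    rw [hs, Finsupp.finset_sum_apply]
    have hsum : ∀ p ∈ t.support,
        (Finsupp.single (p.1 + 2, p.2 + 2) (t p) + g p) q₀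
          = if p = p₀ then t p₀ else 0 := by
      intro p hp
      rw [Finsupp.add_apply, hg0 p hp, add_zero, Finsupp.single_apply]
      by_cases hpp : p = p₀
      · subst hpp
        simp [hq₀]
      · have hne2 : (p.1 + 2, p.2 + 2) ≠ q₀ := by
          rw [hq₀]
          intro h
          have h1 := congrArg Prod.fst h
          have h2 := congrArg Prod.snd h
          simp only at h1 h2
          exact hpp (Prod.ext (by omega) (by omega))
        rw [if_neg hne2, if_neg hpp]
    rw [Finset.sum_congr rfl hsum, Finset.sum_ite_eq' t.support p₀ (fun _ => t p₀),
      if_pos hp₀m]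
  rw [hsf, hf0] at hs0
  exact Finsupp.mem_support_iff.1 hp₀m hs0.symm
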